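/- arXiv:2207.01347 — 2 statements merged into one kernel-verified Lean document; each statement's English description precedes it below -/
import Mathlib

section
/- Let B be a nonempty cone in the real Banach space X (i.e., tu ∈ B whenever u ∈ B and t ≥ 0), let e ∈ X \ B with −e ∉ B, and let Q = {u + se : u ∈ B, s ≥ 0}. Then no nonempty subset of X \ Q links B; more precisely, for every nonempty A ⊂ X \ Q there exists Γ ∈ Φ (for instance Γ(u,t) = (1−t)u − te) such that Γ(A × (0,1]) ∩ B = ∅. -/
set_option autoImplicit false

open Filter Topology Bornology Set

/-- The class `Φ` of deformations of Schechter. -/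
structure LinkingDeformation (X : Type*) [NormedAddCommGroup X] [NormedSpace ℝ X] where
  toFun : ℝ → X → X
  invFun : ℝ → X → X
  cont : ContinuousOn (fun p : ℝ × X => toFun p.1 p.2) (Set.Icc (0 : ℝ) 1 ×ˢ Set.univ)
  init : ∀ u : X, toFun 0 u = u
  left_inv : ∀ t ∈ Set.Ico (0 : ℝ) 1, Function.LeftInverse (invFun t) (toFun t)
  right_inv : ∀ t ∈ Set.Ico (0 : ℝ) 1, Function.RightInverse (invFun t) (toFun t)
  inv_cont : ContinuousOn (fun p : ℝ × X => invFun p.1 p.2) (Set.Ico (0 : ℝ) 1 ×ˢ Set.univ)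
  endpoint : ∃ q : X, (∀ u : X, toFun 1 u = q) ∧
    ∀ A : Set X, IsBounded A → ∀ ε > (0 : ℝ), ∃ δ > (0 : ℝ),
      ∀ t ∈ Set.Ico (1 - δ) (1 : ℝ), ∀ u ∈ A, ‖toFun t u - q‖ < ε
  bound : ∀ A : Set X, IsBounded A → ∀ t₀ ∈ Set.Ico (0 : ℝ) 1,
    ∃ C : ℝ, ∀ u ∈ A, ∀ t ∈ Set.Icc (0 : ℝ) t₀, ‖toFun t u‖ + ‖invFun t u‖ ≤ C

/-- `A` links `B` in the sense of Schechter. -/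
def Links {X : Type*} [NormedAddCommGroup X] [NormedSpace ℝ X] (A B : Set X) : Prop :=
  ∀ Γ : LinkingDeformation X, ∃ u ∈ A, ∃ t ∈ Set.Ioc (0 : ℝ) 1, Γ.toFun t u ∈ B

/-- The explicit deformation `Γ(t)u = (1-t)•u - t•e`. -/
noncomputable def gammaDef {X : Type*} [NormedAddCommGroup X] [NormedSpace ℝ X] (e : X) :
    LinkingDeformation X where
  toFun t u := (1 - t) • u - t • e
  invFun t u := (1 - t)⁻¹ • (u + t • e)
  cont := Continuous.continuousOn (by fun_prop)
  init u := by simp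
  left_inv t ht u := by
    have h : (1 : ℝ) - t ≠ 0 := by have := ht.2; intro h; linarith [sub_eq_zero.mp h]
    show (1 - t)⁻¹ • ((1 - t) • u - t • e + t • e) = u
    rw [sub_add_cancel, smul_smul, inv_mul_cancel₀ h, one_smul]
  right_inv t ht u := by
    have h : (1 : ℝ) - t ≠ 0 := by have := ht.2; intro h; linarith [sub_eq_zero.mp h]
    show (1 - t) • ((1 - t)⁻¹ • (u + t • e)) - t • e = u
    rw [smul_smul, mul_inv_cancel₀ h, one_smul, add_sub_cancel_right]
  inv_cont := by
    apply ContinuousOn.smul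
    · apply ContinuousOn.inv₀ (Continuous.continuousOn (by fun_prop))
      rintro ⟨t, u⟩ ⟨ht, -⟩
      have : t < 1 := ht.2
      intro h
      have := sub_eq_zero.mp h
      linarith
    · exact Continuous.continuousOn (by fun_prop)
  endpoint := by
    refine ⟨-e, fun u => by simp, fun A hA ε hε => ?_⟩
    obtain ⟨M, hM⟩ := (isBounded_iff_forall_norm_le).mp hA
    set M' : ℝ := max M 0 with hM'
    have hM'0 : 0 ≤ M' := le_max_right _ _
    set C : ℝ := M' + ‖e‖ + 1 with hC
    have hCpos : 0 < C := by positivity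
    refine ⟨ε / C, by positivity, fun t ht u hu => ?_⟩
    have h1 : 1 - t ≤ ε / C := by have := ht.1; linarith
    have h2 : 0 < 1 - t := by have := ht.2; linarith
    have key : (1 - t) • u - t • e - (-e) = (1 - t) • (u + e) := by module
    rw [key, norm_smul, Real.norm_eq_abs, abs_of_pos h2]
    have hu' : ‖u + e‖ ≤ M' + ‖e‖ := by
      calc ‖u + e‖ ≤ ‖u‖ + ‖e‖ := norm_add_le _ _
        _ ≤ M' + ‖e‖ := by have := hM u hu; have : ‖u‖ ≤ M' := le_trans this (le_max_left _ _); linarith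
    have hlt : (1 - t) * ‖u + e‖ ≤ (ε / C) * (M' + ‖e‖) := by
      apply mul_le_mul h1 hu' (norm_nonneg _) (by positivity)
    have : (ε / C) * (M' + ‖e‖) < ε := by
      rw [div_mul_eq_mul_div, div_lt_iff₀ hCpos]
      nlinarith
    linarith
  bound := by
    intro A hA t₀ ht₀
    obtain ⟨M, hM⟩ := (isBounded_iff_forall_norm_le).mp hA
    set M' : ℝ := max M 0 with hM'
    have hM'0 : 0 ≤ M' := le_max_right _ _
    have h0 : 0 < 1 - t₀ := by have := ht₀.2; linarith
    refine ⟨M' + ‖e‖ + (1 - t₀)⁻¹ * (M' + ‖e‖), fun u hu t ht => ?_⟩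
    have hu' : ‖u‖ ≤ M' := le_trans (hM u hu) (le_max_left _ _)
    have ht1 : t ≤ t₀ := ht.2
    have ht0 : 0 ≤ t := ht.1
    have h2 : 0 < 1 - t := by linarith
    have htle : t ≤ 1 := by linarith
    have hf : ‖(1 - t) • u - t • e‖ ≤ M' + ‖e‖ := by
      calc ‖(1 - t) • u - t • e‖ ≤ ‖(1 - t) • u‖ + ‖t • e‖ := norm_sub_le _ _
        _ = (1 - t) * ‖u‖ + t * ‖e‖ := by
            rw [norm_smul, norm_smul, Real.norm_eq_abs, Real.norm_eq_abs,
              abs_of_pos h2, abs_of_nonneg ht0]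
        _ ≤ M' + ‖e‖ := by nlinarith [norm_nonneg u, norm_nonneg e]
    have hi : ‖(1 - t)⁻¹ • (u + t • e)‖ ≤ (1 - t₀)⁻¹ * (M' + ‖e‖) := by
      rw [norm_smul, Real.norm_eq_abs, abs_of_pos (inv_pos.mpr h2)]
      have hinv : (1 - t)⁻¹ ≤ (1 - t₀)⁻¹ := by
        apply inv_anti₀ h0 (by linarith)
      have hn : ‖u + t • e‖ ≤ M' + ‖e‖ := by
        calc ‖u + t • e‖ ≤ ‖u‖ + ‖t • e‖ := norm_add_le _ _
          _ = ‖u‖ + t * ‖e‖ := by rw [norm_smul, Real.norm_eq_abs, abs_of_nonneg ht0]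
          _ ≤ M' + ‖e‖ := by nlinarith [norm_nonneg e]
      apply mul_le_mul hinv hn (norm_nonneg _) (by positivity)
    linarith

/-- **Lemma 2.**  Let `B` be a nonempty cone, `e ∈ X \ B` with `-e ∉ B`, and
`Q = {u + s e : u ∈ B, s ≥ 0}`.  Then no nonempty subset `A` of `X \ Q` links
`B`: there is `Γ ∈ Φ` with `Γ(A × (0,1]) ∩ B = ∅`. -/
theorem stmt_4
    {X : Type*} [NormedAddCommGroup X] [NormedSpace ℝ X] [CompleteSpace X]
    (B : Set X) (hBne : B.Nonempty)
    (hcone : ∀ u ∈ B, ∀ t : ℝ, 0 ≤ t → t • u ∈ B)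
    (e : X) (he : e ∉ B) (he' : -e ∉ B)
    (Q : Set X) (hQ : Q = {x : X | ∃ u ∈ B, ∃ s : ℝ, 0 ≤ s ∧ x = u + s • e}) :
    ∀ A : Set X, A ⊆ Qᶜ → A.Nonempty →
      ¬ Links A B ∧
      ∃ Γ : LinkingDeformation X,
        (∀ (u : X) (t : ℝ), Γ.toFun t u = (1 - t) • u - t • e) ∧
        ∀ u ∈ A, ∀ t ∈ Set.Ioc (0 : ℝ) 1, Γ.toFun t u ∉ B := by
  intro A hAQ hAne
  have key : ∀ u ∈ A, ∀ t ∈ Set.Ioc (0 : ℝ) 1, (1 - t) • u - t • e ∉ B := by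
    intro u hu t ht hb
    rcases eq_or_lt_of_le ht.2 with h1 | h1
    · subst h1
      simp at hb
      exact he' hb
    · have h2 : (0 : ℝ) < 1 - t := by linarith
      have hb' : (1 - t)⁻¹ • ((1 - t) • u - t • e) ∈ B :=
        hcone _ hb _ (le_of_lt (inv_pos.mpr h2))
      have hs : (0 : ℝ) ≤ t * (1 - t)⁻¹ := mul_nonneg ht.1.le (inv_nonneg.mpr h2.le)
      have huQ : u ∈ Q := by
        rw [hQ]
        refine ⟨_, hb', t * (1 - t)⁻¹, hs, ?_⟩
        have hne : (1 : ℝ) - t ≠ 0 := ne_of_gt h2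
        rw [smul_sub, smul_smul, smul_smul, inv_mul_cancel₀ hne, one_smul]
        module
      exact hAQ hu huQ
  refine ⟨?_, gammaDef e, fun u t => rfl, fun u hu t ht => key u hu t ht⟩
  intro hL
  obtain ⟨u, hu, t, ht, hb⟩ := hL (gammaDef e)
  exact key u hu t ht hb
end

section
/- Let A and B be disjoint nonempty subsets of the real Banach space X such that A links B. Assume B is a cone (tu ∈ B whenever u ∈ B and t ≥ 0), let e ∈ X \ B with −e ∉ B, and let Q = {u + se : u ∈ B, s ≥ 0}. Then h(Q) ∩ A ≠ ∅ for every h ∈ H̃, where H̃ = {h ∈ H : h restricted to B is the identity}. -/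
set_option autoImplicit false

open Filter Topology Bornology Set

noncomputable def defGamma {X : Type*} [NormedAddCommGroup X] [NormedSpace ℝ X]
    (h : X ≃ₜ X) (hb1 : ∀ s : Set X, IsBounded s → IsBounded (h '' s))
    (hb2 : ∀ s : Set X, IsBounded s → IsBounded (h.symm '' s))
    (e : X) : LinkingDeformation X where
  toFun t u := h ((1 - t) • h.symm u - t • e)
  invFun t u := h ((1 - t)⁻¹ • (h.symm u + t • e))
  cont := by
    apply Continuous.continuousOn
    exact h.continuous.comp <| (((continuous_const.sub continuous_fst).smul
      (h.symm.continuous.comp continuous_snd)).sub (continuous_fst.smul continuous_const))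
  init u := by simp
  left_inv := by
    intro t ht u
    have h1 : (1 : ℝ) - t ≠ 0 := by
      have := ht.2; intro hc; nlinarith [hc]
    simp only [Homeomorph.symm_apply_apply]
    rw [sub_add_cancel, smul_smul, inv_mul_cancel₀ h1, one_smul, Homeomorph.apply_symm_apply]
  right_inv := by
    intro t ht u
    have h1 : (1 : ℝ) - t ≠ 0 := by
      have := ht.2; intro hc; nlinarith [hc]
    simp only [Homeomorph.symm_apply_apply]
    rw [smul_smul, mul_inv_cancel₀ h1, one_smul, add_sub_cancel_right,
      Homeomorph.apply_symm_apply]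
  inv_cont := by
    apply Homeomorph.continuous h |>.comp_continuousOn
    apply ContinuousOn.smul
    · apply ContinuousOn.inv₀
      · exact (continuous_const.sub continuous_fst).continuousOn
      · rintro ⟨t, u⟩ ⟨ht, -⟩ hc
        have : t < 1 := ht.2
        simp only at hc
        linarith [sub_eq_zero.mp hc]
    · exact ((h.symm.continuous.comp continuous_snd).add
        (continuous_fst.smul continuous_const)).continuousOn
  endpoint := by
    refine ⟨h (-e), fun u => by simp, ?_⟩
    intro A hA ε hε
    obtain ⟨R₀, hR₀⟩ := (hb2 A hA).exists_norm_le
    set R : ℝ := max R₀ 0 with hRdef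
    have hR : ∀ x ∈ h.symm '' A, ‖x‖ ≤ R := fun x hx => le_trans (hR₀ x hx) (le_max_left _ _)
    have hRnn : (0:ℝ) ≤ R := le_max_right _ _
    have hcont := h.continuous.continuousAt (x := -e)
    rw [Metric.continuousAt_iff] at hcont
    obtain ⟨η, hη, hball⟩ := hcont ε hε
    refine ⟨η / (R + ‖e‖ + 1), by positivity, ?_⟩
    intro t ht u hu
    have h1t : 0 < 1 - t := by linarith [ht.2]
    have h1t' : 1 - t ≤ η / (R + ‖e‖ + 1) := by linarith [ht.1]
    rw [← dist_eq_norm]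
    apply hball
    rw [dist_eq_norm]
    have : (1 - t) • h.symm u - t • e - -e = (1 - t) • (h.symm u + e) := by
      rw [smul_add]; module
    rw [this, norm_smul, Real.norm_eq_abs, abs_of_pos h1t]
    have hn : ‖h.symm u + e‖ ≤ R + ‖e‖ :=
      le_trans (norm_add_le _ _) (by gcongr; exact hR _ ⟨u, hu, rfl⟩)
    calc (1 - t) * ‖h.symm u + e‖ ≤ (η / (R + ‖e‖ + 1)) * (R + ‖e‖) := by
          apply mul_le_mul h1t' hn (norm_nonneg _) (by positivity)
      _ < η := by
          rw [div_mul_eq_mul_div, div_lt_iff₀ (by positivity)]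
          nlinarith [norm_nonneg e]
  bound := by
    intro A hA t₀ ht₀
    obtain ⟨R₀, hR₀⟩ := (hb2 A hA).exists_norm_le
    set R : ℝ := max R₀ 0 with hRdef
    have hR : ∀ x ∈ h.symm '' A, ‖x‖ ≤ R := fun x hx => le_trans (hR₀ x hx) (le_max_left _ _)
    have hRnn : (0:ℝ) ≤ R := le_max_right _ _
    have h1t₀ : 0 < 1 - t₀ := by linarith [ht₀.2]
    obtain ⟨C₁, hC₁⟩ := (hb1 _ (Metric.isBounded_closedBall
      (x := (0:X)) (r := R + ‖e‖))).exists_norm_le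
    obtain ⟨C₂, hC₂⟩ := (hb1 _ (Metric.isBounded_closedBall
      (x := (0:X)) (r := (1 - t₀)⁻¹ * (R + ‖e‖)))).exists_norm_le
    refine ⟨C₁ + C₂, ?_⟩
    intro u hu t ht
    have hvR : ‖h.symm u‖ ≤ R := hR _ ⟨u, hu, rfl⟩
    have ht0 : 0 ≤ t := ht.1
    have ht1 : t ≤ 1 := le_trans ht.2 (le_of_lt ht₀.2)
    have h1t : 0 < 1 - t := by linarith [lt_of_le_of_lt ht.2 ht₀.2]
    have b1 : ‖(1 - t) • h.symm u - t • e‖ ≤ R + ‖e‖ := by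
      calc ‖(1 - t) • h.symm u - t • e‖ ≤ ‖(1 - t) • h.symm u‖ + ‖t • e‖ := norm_sub_le _ _
        _ ≤ 1 * R + 1 * ‖e‖ := by
            rw [norm_smul, norm_smul, Real.norm_eq_abs, Real.norm_eq_abs,
              abs_of_pos h1t, abs_of_nonneg ht0]
            apply add_le_add
            · exact mul_le_mul (by linarith) hvR (norm_nonneg _) (by norm_num)
            · exact mul_le_mul ht1 le_rfl (norm_nonneg _) (by norm_num)
        _ = R + ‖e‖ := by ring
    have b2 : ‖(1 - t)⁻¹ • (h.symm u + t • e)‖ ≤ (1 - t₀)⁻¹ * (R + ‖e‖) := by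
      rw [norm_smul, Real.norm_eq_abs, abs_of_pos (inv_pos.mpr h1t)]
      have hinv : (1 - t)⁻¹ ≤ (1 - t₀)⁻¹ := by
        apply inv_anti₀ h1t₀; linarith [ht.2]
      have hn : ‖h.symm u + t • e‖ ≤ R + ‖e‖ := by
        calc ‖h.symm u + t • e‖ ≤ ‖h.symm u‖ + ‖t • e‖ := norm_add_le _ _
          _ ≤ R + 1 * ‖e‖ := by
              rw [norm_smul, Real.norm_eq_abs, abs_of_nonneg ht0]
              exact add_le_add hvR (mul_le_mul ht1 le_rfl (norm_nonneg _) (by norm_num))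
          _ = R + ‖e‖ := by ring
      exact mul_le_mul hinv hn (norm_nonneg _) (by positivity)
    have e1 : ‖h ((1 - t) • h.symm u - t • e)‖ ≤ C₁ :=
      hC₁ _ ⟨_, by simpa [Metric.mem_closedBall, dist_eq_norm] using b1, rfl⟩
    have e2 : ‖h ((1 - t)⁻¹ • (h.symm u + t • e))‖ ≤ C₂ :=
      hC₂ _ ⟨_, by simpa [Metric.mem_closedBall, dist_eq_norm] using b2, rfl⟩
    exact add_le_add e1 e2

/-- **Lemma 3 (intersection lemma).**  If `A` and `B` are disjoint nonempty
subsets with `A` linking `B`, `B` a cone, `e ∈ X \ B` with `-e ∉ B`, and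
`Q = {u + s e : u ∈ B, s ≥ 0}`, then `h(Q) ∩ A ≠ ∅` for every `h ∈ H̃`,
where `H̃` is the class of homeomorphisms of `X` mapping bounded sets to
bounded sets in both directions and restricting to the identity on `B`. -/
theorem stmt_5
    {X : Type*} [NormedAddCommGroup X] [NormedSpace ℝ X] [CompleteSpace X]
    (A B : Set X) (hAne : A.Nonempty) (hBne : B.Nonempty)
    (hdisj : Disjoint A B) (hlinks : Links A B)
    (hcone : ∀ u ∈ B, ∀ t : ℝ, 0 ≤ t → t • u ∈ B)
    (e : X) (he : e ∉ B) (he' : -e ∉ B)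
    (Q : Set X) (hQ : Q = {x : X | ∃ u ∈ B, ∃ s : ℝ, 0 ≤ s ∧ x = u + s • e}) :
    ∀ h : X ≃ₜ X,
      (∀ s : Set X, IsBounded s → IsBounded (h '' s)) →
      (∀ s : Set X, IsBounded s → IsBounded (h.symm '' s)) →
      (∀ u ∈ B, h u = u) →
      ∃ u ∈ Q, h u ∈ A := by
  intro h hb1 hb2 hid
  by_contra hcon
  push_neg at hcon
  obtain ⟨u, huA, t, ht, hB⟩ := hlinks (defGamma h hb1 hb2 e)
  have hB' : h ((1 - t) • h.symm u - t • e) ∈ B := hB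
  set w := (1 - t) • h.symm u - t • e with hw
  have hfix : ∀ b ∈ B, h.symm b = b := by
    intro b hb
    conv_lhs => rw [← hid b hb]
    exact h.symm_apply_apply b
  have hwB : w ∈ B := by
    have h1 := hfix _ hB'
    rw [h.symm_apply_apply] at h1
    rw [h1]; exact hB'
  rcases eq_or_lt_of_le ht.2 with heq | hlt
  · apply he'
    have : w = -e := by rw [hw, heq]; simp
    rwa [this] at hwB
  · have h1t : (0:ℝ) < 1 - t := by linarith
    have h1ne : (1:ℝ) - t ≠ 0 := ne_of_gt h1t
    have hv : h.symm u = (1 - t)⁻¹ • w + (t * (1 - t)⁻¹) • e := by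
      rw [hw, smul_sub, smul_smul, smul_smul, inv_mul_cancel₀ h1ne, one_smul,
        mul_comm t, sub_add_cancel]
    have hvQ : h.symm u ∈ Q := by
      rw [hQ]
      refine ⟨(1 - t)⁻¹ • w, hcone w hwB _ (le_of_lt (inv_pos.mpr h1t)), t * (1 - t)⁻¹,
        mul_nonneg (le_of_lt ht.1) (le_of_lt (inv_pos.mpr h1t)), hv⟩
    exact hcon _ hvQ (by rwa [h.apply_symm_apply])
end
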